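/- Let X be a locally compact, locally countable Hausdorff topological space with |X| ≥ 2^{ℵ₀}, and suppose that every closed subspace of X of cardinality at most 2^{ℵ₀} has the Moving Off Property. Then X has the Moving Off Property. -/

import Mathlib

open Set Topology

/-- A family of sets indexed by `ι` is *discrete* if every point has a neighborhood
meeting at most one member of the family. -/
def IsDiscreteFamily {ι X : Type*} [TopologicalSpace X] (U : ι → Set X) : Prop :=
  ∀ x : X, ∃ V ∈ nhds x, {i : ι | (U i ∩ V).Nonempty}.Subsingleton

/-- A *moving off collection* for `X`: a family of nonempty compact sets such that every
compact set is disjoint from some member of the family. -/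
def IsMovingOff {X : Type*} [TopologicalSpace X] (𝒦 : Set (Set X)) : Prop :=
  (∀ K ∈ 𝒦, K.Nonempty) ∧ (∀ K ∈ 𝒦, IsCompact K) ∧
    ∀ L : Set X, IsCompact L → ∃ K ∈ 𝒦, Disjoint K L

/-- The *Moving Off Property*: every moving off collection contains an infinite subfamily
of pairwise distinct sets admitting a discrete open expansion. -/
def HasMOP (X : Type*) [TopologicalSpace X] : Prop :=
  ∀ 𝒦 : Set (Set X), IsMovingOff 𝒦 →
    ∃ K : ℕ → Set X, (∀ n, K n ∈ 𝒦) ∧ Function.Injective K ∧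
      ∃ U : ℕ → Set X, (∀ n, IsOpen (U n)) ∧ (∀ n, K n ⊆ U n) ∧ IsDiscreteFamily U

/-- A space is *locally countable* if every point has a countable neighborhood. -/
def LocallyCountable (X : Type*) [TopologicalSpace X] : Prop :=
  ∀ x : X, ∃ N ∈ nhds x, N.Countable

section Auxiliary

open Cardinal

universe u

/-- Transfinite iteration of an expansion operator `F` on sets. -/
noncomputable def mopChain {X : Type u} (F : Set X → Set X) : Ordinal.{u} → Set X :=
  fun o => F (⋃ o' : Set.Iio o, mopChain F o'.1)
termination_by o => o
decreasing_by exact o'.2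

theorem mopChain_def {X : Type u} (F : Set X → Set X) (o : Ordinal.{u}) :
    mopChain F o = F (⋃ o' : Set.Iio o, mopChain F o'.1) := by
  rw [mopChain]

theorem mopChain_mono {X : Type u} {F : Set X → Set X} (hF : ∀ A, A ⊆ F A)
    {o' o : Ordinal.{u}} (h : o' ≤ o) : mopChain F o' ⊆ mopChain F o := by
  rcases h.lt_or_eq with hlt | rfl
  · rw [mopChain_def F o]
    exact (subset_iUnion (fun x : Set.Iio o => mopChain F x.1) ⟨o', hlt⟩).trans (hF _)
  · exact subset_rfl

theorem card_iUnion_le' {X : Type u} {ι : Type u} (f : ι → Set X) (c : Cardinal.{u})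
    (hc : ℵ₀ ≤ c) (hι : #ι ≤ c) (hf : ∀ i, #(f i) ≤ c) : #(⋃ i, f i) ≤ c := by
  refine mk_iUnion_le_sum_mk.trans ((sum_le_sum _ (fun _ => c) hf).trans ?_)
  rw [sum_const']
  exact (mul_le_mul' hι le_rfl).trans (mul_eq_self hc).le

theorem card_iUnion_Iio_le {X : Type u} (g : Ordinal.{u} → Set X) (o : Ordinal.{u})
    (c : Cardinal.{u}) (hc : ℵ₀ ≤ c) (ho : o.card ≤ c) (hg : ∀ o' < o, #(g o') ≤ c) :
    #(⋃ o' : Set.Iio o, g o'.1) ≤ c := by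
  have he : (⋃ o' : Set.Iio o, g o'.1) = ⋃ i : o.ToType, g ((Ordinal.ToType.mk (o := o)).symm i).1 := by
    ext x
    simp only [Set.mem_iUnion]
    constructor
    · rintro ⟨a, hx⟩
      exact ⟨Ordinal.ToType.mk (o := o) a, by simpa using hx⟩
    · rintro ⟨i, hx⟩
      exact ⟨(Ordinal.ToType.mk (o := o)).symm i, hx⟩
  rw [he]
  refine card_iUnion_le' _ c hc ?_ ?_
  · rw [Cardinal.mk_toType]; exact ho
  · exact fun i => hg _ ((Ordinal.ToType.mk (o := o)).symm i).2

theorem card_countable_subsets_le {X : Type u} (A : Set X) (hA : #A ≤ 𝔠) :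
    #{S : Set X // S ⊆ A ∧ S.Countable} ≤ 𝔠 := by
  classical
  have key : ∀ S : Set X, S ⊆ A → S.Countable → S.Nonempty →
      ∃ g : ℕ → ↥A, S = Subtype.val '' Set.range g := by
    intro S hSA hSc hSne
    have hpre : (Subtype.val ⁻¹' S : Set ↥A).Countable := hSc.preimage Subtype.val_injective
    obtain ⟨a, ha⟩ := hSne
    have hpne : (Subtype.val ⁻¹' S : Set ↥A).Nonempty := ⟨⟨a, hSA ha⟩, ha⟩
    obtain ⟨g, hg⟩ := hpre.exists_eq_range hpne
    refine ⟨g, ?_⟩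
    rw [← hg, Set.image_preimage_eq_inter_range, Subtype.range_coe, inter_eq_left.2 hSA]
  have hinj : ∃ f : {S : Set X // S ⊆ A ∧ S.Countable} → Option (ℕ → ↥A),
      Function.Injective f := by
    refine ⟨fun S => if h : S.1.Nonempty then some (key S.1 S.2.1 S.2.2 h).choose else none, ?_⟩
    rintro S₁ S₂ he
    dsimp only at he
    by_cases h1 : S₁.1.Nonempty <;> by_cases h2 : S₂.1.Nonempty
    · rw [dif_pos h1, dif_pos h2] at he
      have e1 := (key S₁.1 S₁.2.1 S₁.2.2 h1).choose_spec
      have e2 := (key S₂.1 S₂.2.1 S₂.2.2 h2).choose_spec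
      apply Subtype.ext
      rw [e1, e2, Option.some.inj he]
    · rw [dif_pos h1, dif_neg h2] at he
      exact absurd he (by simp)
    · rw [dif_neg h1, dif_pos h2] at he
      exact absurd he (by simp)
    · apply Subtype.ext
      rw [not_nonempty_iff_eq_empty.1 h1, not_nonempty_iff_eq_empty.1 h2]
  obtain ⟨f, hf⟩ := hinj
  refine (mk_le_of_injective hf).trans ?_
  rw [mk_option]
  have h1 : #(ℕ → ↥A) ≤ 𝔠 := by
    have e : (ℕ → ↥A) ≃ (ULift.{u} ℕ → ↥A) :=
      Equiv.arrowCongr Equiv.ulift.symm (Equiv.refl _)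
    rw [Cardinal.mk_congr e, ← Cardinal.power_def, Cardinal.mk_eq_aleph0 (ULift.{u} ℕ)]
    exact (power_le_power_right hA).trans continuum_power_aleph0.le
  have h2 : (1 : Cardinal.{u}) ≤ 𝔠 := one_le_aleph0.trans aleph0_le_continuum
  exact (add_le_add h1 h2).trans (add_eq_self aleph0_le_continuum).le

theorem compact_countable {X : Type u} [TopologicalSpace X] (hlc : LocallyCountable X)
    {L : Set X} (hL : IsCompact L) : L.Countable := by
  classical
  choose N hN hNc using hlc
  obtain ⟨t, ht⟩ := hL.elim_nhds_subcover N (fun x _ => hN x)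
  exact (t.countable_toSet.biUnion (fun x _ => hNc x)).mono ht.2

theorem card_closure_le {X : Type u} [TopologicalSpace X] [T2Space X] [LocallyCompactSpace X]
    (hlc : LocallyCountable X) (A : Set X) (hA : #A ≤ 𝔠) : #(closure A) ≤ 𝔠 := by
  classical
  have enum : ∀ S : Set X, ∃ e : X → ℕ, S.Countable → InjOn e S := by
    intro S
    by_cases h : S.Countable
    · obtain ⟨e, he⟩ := Set.countable_iff_exists_injOn.1 h
      exact ⟨e, fun _ => he⟩
    · exact ⟨fun _ => 0, fun hc => absurd hc h⟩
  choose e he using enum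
  have key : ∀ y ∈ closure A, ∃ S : Set X, S ⊆ A ∧ S.Countable ∧ (closure S).Countable ∧
      y ∈ closure S := by
    intro y hy
    obtain ⟨N, hN, hNc⟩ := hlc y
    obtain ⟨K, hK, hKN, hKcomp⟩ := local_compact_nhds hN
    have hKcl : IsClosed K := hKcomp.isClosed
    have hsub : A ∩ interior K ⊆ N := (inter_subset_right).trans (interior_subset.trans hKN)
    refine ⟨A ∩ interior K, inter_subset_left, hNc.mono hsub, ?_, ?_⟩
    · refine hNc.mono ?_
      calc closure (A ∩ interior K) ⊆ closure K :=
            closure_mono ((inter_subset_right).trans interior_subset)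
        _ = K := hKcl.closure_eq
        _ ⊆ N := hKN
    · have hmem : y ∈ interior K ∩ closure A := ⟨mem_interior_iff_mem_nhds.2 hK, hy⟩
      have := isOpen_interior.inter_closure hmem
      rwa [inter_comm] at this
  choose! S hSA hSc hScl hyS using key
  have hfinj : Function.Injective
      (fun y : ↥(closure A) =>
        ((⟨S y.1, hSA y.1 y.2, hSc y.1 y.2⟩ : {T : Set X // T ⊆ A ∧ T.Countable}),
          e (closure (S y.1)) y.1)) := by
    rintro y₁ y₂ hy
    have h1 : S y₁.1 = S y₂.1 := congrArg Subtype.val (congrArg Prod.fst hy)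
    have h2 := congrArg Prod.snd hy
    dsimp only at h2
    apply Subtype.ext
    refine he (closure (S y₁.1)) (hScl y₁.1 y₁.2) (hyS y₁.1 y₁.2) ?_ ?_
    · rw [h1]; exact hyS y₂.1 y₂.2
    · rw [h1] at h2 ⊢; exact h2
  refine (mk_le_of_injective hfinj).trans ?_
  rw [Cardinal.mk_prod, Cardinal.lift_uzero, Cardinal.mk_nat, Cardinal.lift_aleph0]
  exact ((mul_le_mul' (card_countable_subsets_le A hA) aleph0_le_continuum).trans
    (mul_eq_self aleph0_le_continuum).le)

end Auxiliary

/-- Theorem 14: if `X` is locally compact, locally countable, Hausdorff, of cardinality at least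
the continuum, and every closed subspace of cardinality at most the continuum has the MOP,
then `X` has the MOP. -/
theorem mop_of_small_closed_subspaces (X : Type*) [TopologicalSpace X] [T2Space X]
    [LocallyCompactSpace X] (hlc : LocallyCountable X)
    (hcard : Cardinal.continuum ≤ Cardinal.mk X)
    (h : ∀ Y : Set X, IsClosed Y → Cardinal.mk Y ≤ Cardinal.continuum → HasMOP Y) :
    HasMOP X := by
  classical
  open Cardinal in
  intro 𝒦 hmo
  obtain ⟨hne, hcomp, hmov⟩ := hmo
  -- choice of a member of 𝒦 missing each compact set
  have hkex : ∀ L : Set X, ∃ K : Set X, IsCompact L → K ∈ 𝒦 ∧ Disjoint K L := by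
    intro L
    by_cases hL : IsCompact L
    · obtain ⟨K, hK, hd⟩ := hmov L hL
      exact ⟨K, fun _ => ⟨hK, hd⟩⟩
    · exact ⟨∅, fun hc => absurd hc hL⟩
  choose k hkspec using hkex
  -- countable open neighborhoods
  have hOex : ∀ x : X, ∃ O : Set X, IsOpen O ∧ x ∈ O ∧ O.Countable := by
    intro x
    obtain ⟨N, hN, hNc⟩ := hlc x
    exact ⟨interior N, isOpen_interior, mem_interior_iff_mem_nhds.2 hN,
      hNc.mono interior_subset⟩
  choose O hOopen hOmem hOc using hOex
  -- the expansion operator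
  set F : Set X → Set X := fun A =>
    (⋃ y : ↥(closure A), O y.1) ∪ ⋃ L : {L : Set X // L ⊆ A ∧ IsCompact L}, k L.1 with hFdef
  have hFO : ∀ (A : Set X) (x : X), x ∈ closure A → O x ⊆ F A := by
    intro A x hx
    exact (subset_iUnion (fun y : ↥(closure A) => O y.1) ⟨x, hx⟩).trans subset_union_left
  have hFcl : ∀ A : Set X, closure A ⊆ F A := by
    intro A y hy
    exact hFO A y hy (hOmem y)
  have hFsub : ∀ A : Set X, A ⊆ F A := fun A => subset_closure.trans (hFcl A)
  have hFk : ∀ (A L : Set X), L ⊆ A → IsCompact L → k L ⊆ F A := by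
    intro A L h1 h2
    exact (subset_iUnion (fun L : {L : Set X // L ⊆ A ∧ IsCompact L} => k L.1)
      ⟨L, h1, h2⟩).trans subset_union_right
  have hFcard : ∀ A : Set X, #A ≤ 𝔠 → #(F A) ≤ 𝔠 := by
    intro A hA
    have hcl := card_closure_le hlc A hA
    refine (Cardinal.mk_union_le _ _).trans ?_
    have h1 : #(⋃ y : ↥(closure A), O y.1) ≤ 𝔠 := by
      refine card_iUnion_le' _ 𝔠 aleph0_le_continuum hcl fun y => ?_
      have : Countable ↥(O y.1) := (hOc y.1).to_subtype
      exact mk_le_aleph0.trans aleph0_le_continuum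
    have h2 : #(⋃ L : {L : Set X // L ⊆ A ∧ IsCompact L}, k L.1) ≤ 𝔠 := by
      refine card_iUnion_le' _ 𝔠 aleph0_le_continuum ?_ ?_
      · have hi : Function.Injective
            (fun L : {L : Set X // L ⊆ A ∧ IsCompact L} =>
              (⟨L.1, L.2.1, compact_countable hlc L.2.2⟩ :
                {S : Set X // S ⊆ A ∧ S.Countable})) := by
          intro L₁ L₂ hL
          have hval := congrArg
            (Subtype.val (p := fun S : Set X => S ⊆ A ∧ S.Countable)) hL
          exact Subtype.ext hval
        exact (mk_le_of_injective hi).trans (card_countable_subsets_le A hA)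
      · intro L
        have hkL : IsCompact (k L.1) := hcomp _ (hkspec L.1 L.2.2).1
        have : Countable ↥(k L.1) := (compact_countable hlc hkL).to_subtype
        exact mk_le_aleph0.trans aleph0_le_continuum
    exact (add_le_add h1 h2).trans (add_eq_self aleph0_le_continuum).le
  -- the transfinite chain up to ω₁
  set ω₁ : Ordinal := (Cardinal.aleph 1).ord with hω₁def
  set c : Ordinal → Set X := mopChain F with hcdef
  have cdef : ∀ o, c o = F (⋃ o' : Set.Iio o, c o'.1) := fun o => mopChain_def F o
  have cmono : ∀ {o' o : Ordinal}, o' ≤ o → c o' ⊆ c o := fun h => mopChain_mono hFsub h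
  set Y : Set X := ⋃ o : Set.Iio ω₁, c o.1 with hYdef
  have hsucc : ∀ {o : Ordinal}, o < ω₁ → o + 1 < ω₁ := by
    intro o ho
    have := (Cardinal.isSuccLimit_ord (aleph0_le_aleph 1)).succ_lt ho
    rwa [Ordinal.add_one_eq_succ]
  have hlt1 : ∀ o : Ordinal, o < o + 1 := by
    intro o
    rw [Ordinal.add_one_eq_succ]
    exact Order.lt_succ o
  have hchainY : ∀ {o : Ordinal}, o < ω₁ → c o ⊆ Y := by
    intro o ho
    exact subset_iUnion (fun o : Set.Iio ω₁ => c o.1) ⟨o, ho⟩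
  have hsubchain : ∀ o : Ordinal, c o ⊆ ⋃ o' : Set.Iio (o + 1), c o'.1 :=
    fun o => subset_iUnion (fun o' : Set.Iio (o + 1) => c o'.1) ⟨o, hlt1 o⟩
  have hclosure_step : ∀ o : Ordinal, closure (c o) ⊆ c (o + 1) := by
    intro o
    rw [cdef (o + 1)]
    exact (closure_mono (hsubchain o)).trans (hFcl _)
  have hO_step : ∀ (o : Ordinal) (x : X), x ∈ c o → O x ⊆ c (o + 1) := by
    intro o x hx
    rw [cdef (o + 1)]
    exact hFO _ x (subset_closure (hsubchain o hx))
  have hk_step : ∀ (o : Ordinal) (L : Set X), L ⊆ c o → IsCompact L → k L ⊆ c (o + 1) := by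
    intro o L hL hLc
    rw [cdef (o + 1)]
    exact hFk _ L (hL.trans (hsubchain o)) hLc
  -- countable subsets of Y are captured at some stage
  have hP1 : ∀ S : Set X, S.Countable → S ⊆ Y → ∃ o, o < ω₁ ∧ S ⊆ c o := by
    intro S hSc hSY
    rcases S.eq_empty_or_nonempty with rfl | hSne
    · exact ⟨0, (Cardinal.isSuccLimit_ord (aleph0_le_aleph 1)).pos, empty_subset _⟩
    · have hx : ∀ x : ↥S, ∃ o : Ordinal, o < ω₁ ∧ (x : X) ∈ c o := by
        intro x
        obtain ⟨⟨o, ho⟩, hxo⟩ := mem_iUnion.1 (hSY x.2)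
        exact ⟨o, ho, hxo⟩
      choose g hg1 hg2 using hx
      have : Countable ↥S := hSc.to_subtype
      refine ⟨⨆ x, g x, ?_, ?_⟩
      · exact Cardinal.iSup_lt_ord_of_isRegular Cardinal.isRegular_aleph_one
          (mk_le_aleph0.trans_lt aleph0_lt_aleph_one) hg1
      · intro x hxS
        exact cmono (le_ciSup (Ordinal.bddAbove_range g) ⟨x, hxS⟩) (hg2 ⟨x, hxS⟩)
  -- Y is open
  have hYopen : IsOpen Y := by
    rw [isOpen_iff_forall_mem_open]
    intro x hx
    obtain ⟨⟨o, ho⟩, hxo⟩ := mem_iUnion.1 hx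
    exact ⟨O x, (hO_step o x hxo).trans (hchainY (hsucc ho)), hOopen x, hOmem x⟩
  -- Y is closed
  have hYclosed : IsClosed Y := by
    apply isClosed_of_closure_subset
    intro x hx
    obtain ⟨N, hN, hNc⟩ := hlc x
    obtain ⟨K, hK, hKN, hKcomp⟩ := local_compact_nhds hN
    have hxint : x ∈ interior K := mem_interior_iff_mem_nhds.2 hK
    have hxcl : x ∈ closure (interior K ∩ Y) :=
      isOpen_interior.inter_closure ⟨hxint, hx⟩
    have hScount : (interior K ∩ Y).Countable :=
      hNc.mono ((inter_subset_left).trans (interior_subset.trans hKN))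
    obtain ⟨o, ho, hSo⟩ := hP1 _ hScount inter_subset_right
    have hxc : x ∈ closure (c o) := closure_mono hSo hxcl
    exact hchainY (hsucc ho) (hclosure_step o hxc)
  -- cardinality of Y
  have hccard : ∀ o : Ordinal, o < ω₁ → #(c o) ≤ 𝔠 := by
    intro o
    induction o using Ordinal.induction with
    | _ o IH =>
      intro ho
      rw [cdef o]
      apply hFcard
      refine card_iUnion_Iio_le c o 𝔠 aleph0_le_continuum ?_ ?_
      · exact (Cardinal.lt_ord.1 ho).le.trans aleph_one_le_continuum
      · exact fun o' ho' => IH o' ho' (ho'.trans ho)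
  have hYcard : #Y ≤ 𝔠 := by
    rw [hYdef]
    refine card_iUnion_Iio_le c ω₁ 𝔠 aleph0_le_continuum ?_ hccard
    rw [hω₁def, Cardinal.card_ord]
    exact aleph_one_le_continuum
  -- moving-off inside Y
  have hYmov : ∀ L : Set X, L ⊆ Y → IsCompact L → ∃ K ∈ 𝒦, K ⊆ Y ∧ Disjoint K L := by
    intro L hLY hLc
    obtain ⟨o, ho, hLo⟩ := hP1 L (compact_countable hlc hLc) hLY
    obtain ⟨hk1, hk2⟩ := hkspec L hLc
    exact ⟨k L, hk1, (hk_step o L hLo hLc).trans (hchainY (hsucc ho)), hk2⟩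
  -- pass to the subspace Y
  set 𝒦' : Set (Set ↥Y) := {K' : Set ↥Y | Subtype.val '' K' ∈ 𝒦} with h𝒦'def
  have hmo' : IsMovingOff 𝒦' := by
    refine ⟨?_, ?_, ?_⟩
    · intro K' hK'
      exact Set.image_nonempty.1 (hne _ hK')
    · intro K' hK'
      exact Topology.IsEmbedding.subtypeVal.isCompact_iff.2 (hcomp _ hK')
    · intro L' hL'
      have hLc : IsCompact (Subtype.val '' L') := hL'.image continuous_subtype_val
      have hLY : Subtype.val '' L' ⊆ Y := by
        rintro x ⟨y, _, rfl⟩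
        exact y.2
      obtain ⟨K, hK𝒦, hKY, hKd⟩ := hYmov _ hLY hLc
      refine ⟨Subtype.val ⁻¹' K, ?_, ?_⟩
      · show Subtype.val '' (Subtype.val ⁻¹' K) ∈ 𝒦
        rwa [Set.image_preimage_eq_inter_range, Subtype.range_coe, inter_eq_left.2 hKY]
      · rw [Set.disjoint_left]
        intro a haK haL
        exact Set.disjoint_left.1 hKd haK ⟨a, haL, rfl⟩
  obtain ⟨K', hK'mem, hK'inj, U', hU'open, hK'U', hU'disc⟩ := h Y hYclosed hYcard 𝒦' hmo'
  refine ⟨fun n => Subtype.val '' K' n, fun n => hK'mem n, ?_,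
    fun n => Subtype.val '' U' n, ?_, ?_, ?_⟩
  · intro m n hmn
    exact hK'inj ((Set.image_injective.2 Subtype.val_injective) hmn)
  · intro n
    exact hYopen.isOpenMap_subtype_val _ (hU'open n)
  · intro n
    exact Set.image_mono (hK'U' n)
  · intro x
    by_cases hx : x ∈ Y
    · obtain ⟨V', hV', hsub⟩ := hU'disc ⟨x, hx⟩
      refine ⟨Subtype.val '' V', ?_, ?_⟩
      · have hmap : Filter.map Subtype.val (nhds (⟨x, hx⟩ : ↥Y)) = nhds x :=
          hYopen.isOpenEmbedding_subtypeVal.map_nhds_eq ⟨x, hx⟩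
        rw [← hmap]
        exact Filter.image_mem_map hV'
      · intro i hi j hj
        simp only [Set.mem_setOf_eq, ← Set.image_inter Subtype.val_injective] at hi hj
        exact hsub (Set.Nonempty.of_image hi) (Set.Nonempty.of_image hj)
    · refine ⟨Yᶜ, hYclosed.isOpen_compl.mem_nhds hx, ?_⟩
      intro i hi
      exfalso
      obtain ⟨z, hz, hzc⟩ := hi
      obtain ⟨w, _, rfl⟩ := hz
      exact hzc w.2
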